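/- Suppose 𝕂 has characteristic zero. Let k be an integer with 1 ≤ k ≤ n and gcd(k,n) ≠ 1. If gcd(k,M) ≠ 1 or M = n, then the unit u_k = a^k + (a-1)bâ has infinite order in U(𝕂G). -/

import Mathlib

section GT
variable {G : Type*} [Group G] (a b : G) (n : ℕ)

/-- The subgroup of exponents t with b⁻¹ a^t b ∈ ⟨a⟩. -/
def expT (a b : G) : AddSubgroup ℤ where
  carrier := {t : ℤ | b⁻¹ * a ^ t * b ∈ Subgroup.zpowers a}
  zero_mem' := by simp [Subgroup.one_mem]
  add_mem' := by
    intro x y hx hy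
    have h : b⁻¹ * a ^ (x + y) * b = (b⁻¹ * a ^ x * b) * (b⁻¹ * a ^ y * b) := by
      rw [zpow_add]; group
    simp only [Set.mem_setOf_eq] at *
    rw [h]; exact mul_mem hx hy
  neg_mem' := by
    intro x hx
    have h : b⁻¹ * a ^ (-x) * b = (b⁻¹ * a ^ x * b)⁻¹ := by
      rw [zpow_neg]; group
    simp only [Set.mem_setOf_eq] at *
    rw [h]; exact inv_mem hx

theorem expT_key (hn : 2 ≤ n) (ha : orderOf a = n)
    (hb : b ∉ Subgroup.normalizer (Subgroup.zpowers a))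
    (M : ℕ) (hM2 : 2 ≤ M) (hMn : M ≤ n)
    (hMmem : b ∈ Subgroup.normalizer (Subgroup.zpowers (a ^ M)))
    (hMmin : ∀ m : ℕ, 2 ≤ m → m < M → b ∉ Subgroup.normalizer (Subgroup.zpowers (a ^ m))) :
    ∀ t : ℤ, t ∈ expT a b → (M : ℤ) ∣ t := by
  have hn0 : 0 < n := by omega
  have han : a ^ n = 1 := by rw [← ha, pow_orderOf_eq_one]
  have hconjz : ∀ (x : G) (l : ℤ), (b⁻¹ * x * b) ^ l = b⁻¹ * x ^ l * b := by
    intro x l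
    conv_lhs => rw [show b⁻¹ * x * b = b⁻¹ * x * (b⁻¹)⁻¹ by rw [inv_inv]]
    rw [conj_zpow, inv_inv]
  have hnT : (n : ℤ) ∈ expT a b := by
    show b⁻¹ * a ^ (n:ℤ) * b ∈ Subgroup.zpowers a
    rw [zpow_natCast, han]
    simp [Subgroup.one_mem]
  have hMT : (M : ℤ) ∈ expT a b := by
    show b⁻¹ * a ^ (M:ℤ) * b ∈ Subgroup.zpowers a
    have h1 : b⁻¹ * a ^ M * b ∈ Subgroup.zpowers (a ^ M) :=
      (Subgroup.mem_normalizer_iff''.mp hMmem (a ^ M)).mp (Subgroup.mem_zpowers _)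
    have h2 : Subgroup.zpowers (a ^ M) ≤ Subgroup.zpowers a :=
      Subgroup.zpowers_le.mpr ⟨(M : ℤ), zpow_natCast a M⟩
    rw [zpow_natCast]
    exact h2 h1
  obtain ⟨g, hg⟩ := Int.subgroup_cyclic (expT a b)
  have hmemiff : ∀ t : ℤ, t ∈ expT a b ↔ g ∣ t := by
    intro t
    rw [hg, ← AddSubgroup.zmultiples_eq_closure, Int.mem_zmultiples_iff]
  set s : ℕ := g.natAbs with hs
  have hmemiff' : ∀ t : ℤ, t ∈ expT a b ↔ (s : ℤ) ∣ t := by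
    intro t; rw [hmemiff, hs, Int.natAbs_dvd]
  have hsM : s ∣ M := by
    have := (hmemiff' _).mp hMT; exact_mod_cast this
  have hsn : s ∣ n := by
    have := (hmemiff' _).mp hnT; exact_mod_cast this
  have hs0 : s ≠ 0 := by
    intro h0
    rw [h0] at hsM
    simp at hsM; omega
  -- b⁻¹ a^s b = a^w for some natural w
  have hsT : (s : ℤ) ∈ expT a b := (hmemiff' _).mpr dvd_rfl
  obtain ⟨w0, hw0⟩ := Subgroup.mem_zpowers_iff.mp hsT
  set w : ℕ := (w0 % (n:ℤ)).toNat with hwdef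
  have hww : a ^ w = a ^ w0 := by
    rw [← zpow_natCast, hwdef,
      Int.toNat_of_nonneg (Int.emod_nonneg _ (by exact_mod_cast hn0.ne'))]
    rw [zpow_eq_zpow_iff_modEq, ha]
    exact Int.emod_emod_of_dvd w0 dvd_rfl
  have hwb : a ^ w = b⁻¹ * a ^ s * b := by
    rw [hww, hw0, zpow_natCast]
  -- order computation
  have hconj : orderOf (a ^ s) = orderOf (b⁻¹ * a ^ s * b) := by
    apply SemiconjBy.orderOf_eq b⁻¹
    show b⁻¹ * a ^ s = (b⁻¹ * a ^ s * b) * b⁻¹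
    group
  have h1 : orderOf (a ^ s) = n / s := by
    rw [orderOf_pow' a hs0, ha, Nat.gcd_eq_right hsn]
  have hgcdw : Nat.gcd n w = s := by
    rcases Nat.eq_zero_or_pos w with hw0' | hwpos
    · -- w = 0 : a^s = 1, so n ∣ s, s = n
      have : a ^ s = 1 := by
        have h' := hwb
        rw [hw0', pow_zero] at h'
        have : b⁻¹ * a ^ s * b = 1 := h'.symm
        calc a ^ s = b * (b⁻¹ * a ^ s * b) * b⁻¹ := by group
        _ = 1 := by rw [this]; group
      have hns : n ∣ s := ha ▸ orderOf_dvd_of_pow_eq_one this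
      have : s = n := Nat.dvd_antisymm hsn hns
      rw [hw0', Nat.gcd_zero_right, this]
    · have h2 : orderOf (a ^ w) = n / Nat.gcd n w := by
        rw [orderOf_pow' a (by omega), ha]
      rw [hwb, ← hconj, h1] at h2
      -- h2 : n / s = n / gcd n w
      have e1 : n / (n / s) = s := Nat.div_div_self hsn (by omega)
      have e2 : n / (n / Nat.gcd n w) = Nat.gcd n w :=
        Nat.div_div_self (Nat.gcd_dvd_left n w) (by omega)
      rw [← h2, e1] at e2
      exact e2.symm
  have hsw : s ∣ w := hgcdw ▸ Nat.gcd_dvd_right n w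
  -- zpowers equality
  have hE : Subgroup.zpowers (b⁻¹ * a ^ s * b) = Subgroup.zpowers (a ^ s) := by
    apply le_antisymm
    · rw [Subgroup.zpowers_le, ← hwb]
      refine ⟨((w / s : ℕ) : ℤ), ?_⟩
      show ((a : G) ^ s) ^ ((w / s : ℕ) : ℤ) = a ^ w
      rw [zpow_natCast, ← pow_mul, Nat.mul_div_cancel' hsw]
    · rw [Subgroup.zpowers_le, ← hwb]
      have hbez : ((s : ℤ)) = n * Nat.gcdA n w + w * Nat.gcdB n w := by
        rw [← hgcdw]; exact_mod_cast Nat.gcd_eq_gcd_ab n w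
      refine ⟨Nat.gcdB n w, ?_⟩
      show ((a : G) ^ w) ^ (Nat.gcdB n w) = a ^ s
      have e3 : ((a : G) ^ w) ^ (Nat.gcdB n w) = a ^ ((w : ℤ) * Nat.gcdB n w) := by
        rw [zpow_mul, zpow_natCast]
      have e4 : a ^ ((s : ℤ)) = a ^ ((n : ℤ) * Nat.gcdA n w + (w:ℤ) * Nat.gcdB n w) := by
        rw [← hbez]
      rw [zpow_add, zpow_mul, zpow_natCast a n, han, one_zpow, one_mul] at e4
      rw [e3, ← e4]
      exact zpow_natCast a s
  -- b normalizes zpowers (a ^ s)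
  have hbs : b ∈ Subgroup.normalizer (Subgroup.zpowers (a ^ s)) := by
    rw [Subgroup.mem_normalizer_iff]
    intro h
    constructor
    · intro hh
      rw [← hE] at hh
      obtain ⟨l, hl⟩ := Subgroup.mem_zpowers_iff.mp hh
      refine Subgroup.mem_zpowers_iff.mpr ⟨l, ?_⟩
      rw [← hl, hconjz]
      group
    · intro hh
      obtain ⟨l, hl⟩ := Subgroup.mem_zpowers_iff.mp hh
      have heq : h = (b⁻¹ * a ^ s * b) ^ l := by
        rw [hconjz, hl]
        group
      rw [heq, ← hE]
      exact Subgroup.mem_zpowers_iff.mpr ⟨l, rfl⟩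
  -- s ≥ 2
  have hs2 : 2 ≤ s := by
    by_contra hcon
    have hs1 : s = 1 := by omega
    rw [hs1, pow_one] at hbs
    exact hb hbs
  -- s = M
  have hsM' : s = M := by
    have h1 : ¬ s < M := fun hlt => hMmin s hs2 hlt hbs
    have h2 : s ≤ M := Nat.le_of_dvd (by omega) hsM
    omega
  intro t ht
  rw [hmemiff' t, hsM'] at ht
  exact ht
end GT

theorem stmt_11 {𝕂 : Type*} [CommRing 𝕂] [IsDomain 𝕂] [CharZero 𝕂]
    {G : Type*} [Group G] (a b : G) (n : ℕ) (hn : 2 ≤ n) (ha : orderOf a = n)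
    (hA : ¬ (Subgroup.zpowers a).Normal)
    (hb : b ∉ Subgroup.normalizer (Subgroup.zpowers a))
    (ahat : MonoidAlgebra 𝕂 G)
    (hahat : ahat = ∑ i ∈ Finset.range n, (MonoidAlgebra.of 𝕂 G a) ^ i)
    (M : ℕ) (hM2 : 2 ≤ M) (hMn : M ≤ n)
    (hMmem : b ∈ Subgroup.normalizer (Subgroup.zpowers (a ^ M)))
    (hMmin : ∀ m : ℕ, 2 ≤ m → m < M → b ∉ Subgroup.normalizer (Subgroup.zpowers (a ^ m)))
    (k : ℕ) (hk1 : 1 ≤ k) (hkn : k ≤ n) (hgcd : Nat.gcd k n ≠ 1)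
    (hkM : Nat.gcd k M ≠ 1 ∨ M = n)
    (u : (MonoidAlgebra 𝕂 G)ˣ)
    (hu : (u : MonoidAlgebra 𝕂 G) = MonoidAlgebra.of 𝕂 G a ^ k + (MonoidAlgebra.of 𝕂 G a - 1) * MonoidAlgebra.of 𝕂 G b * ahat) :
    ¬ IsOfFinOrder u := by
  classical
  intro hfin
  obtain ⟨m, hm0, hum⟩ := isOfFinOrder_iff_pow_eq_one.mp hfin
  have hn0 : 0 < n := by omega
  have han : a ^ n = 1 := by rw [← ha, pow_orderOf_eq_one]
  -- the number d
  set d : ℕ := Nat.gcd k M with hd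
  have hd2 : 2 ≤ d := by
    have hdne : d ≠ 0 := fun h0 => by
      have hk0 := Nat.eq_zero_of_gcd_eq_zero_left (hd ▸ h0)
      omega
    have hdne1 : d ≠ 1 := by
      rcases hkM with h | h
      · exact hd ▸ h
      · rw [hd, h]; exact hgcd
    omega
  have hdM : d ∣ M := Nat.gcd_dvd_right k M
  have hdk : d ∣ k := Nat.gcd_dvd_left k M
  have hkey : ∀ t : ℤ, t ∈ expT a b → (M : ℤ) ∣ t := expT_key a b n hn ha hb M hM2 hMn hMmem hMmin
  -- collision lemma
  have coll : ∀ j i j' i' : ℤ, a ^ j * b * a ^ i = a ^ j' * b * a ^ i' → (d:ℤ) ∣ j - j' := by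
    intro j i j' i' h
    have hmem : (j - j') ∈ expT a b := by
      show b⁻¹ * a ^ (j - j') * b ∈ Subgroup.zpowers a
      have e1 : a ^ (-j') * (a ^ j * b * a ^ i) * a ^ (-i) = a ^ (j - j') * b := by group
      have e2 : a ^ (-j') * (a ^ j' * b * a ^ i') * a ^ (-i) = b * a ^ (i' - i) := by group
      have h2 : a ^ (j - j') * b = b * a ^ (i' - i) := by rw [← e1, ← e2, h]
      refine ⟨i' - i, ?_⟩
      show a ^ (i' - i) = b⁻¹ * a ^ (j - j') * b
      rw [mul_assoc, h2, ← mul_assoc, inv_mul_cancel, one_mul]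
    exact dvd_trans (Int.natCast_dvd_natCast.mpr hdM) (hkey _ hmem)
  -- the function f
  set f : G → 𝕂 := fun x => if ∃ j i : ℤ, x = a ^ j * b * a ^ i ∧ (d:ℤ) ∣ j then 1 else 0 with hfdef
  have hf1 : ∀ j i : ℤ, (d:ℤ) ∣ j → f (a ^ j * b * a ^ i) = 1 := fun j i hj => if_pos ⟨j, i, rfl, hj⟩
  have hf0 : ∀ j i : ℤ, ¬ (d:ℤ) ∣ j → f (a ^ j * b * a ^ i) = 0 := by
    intro j i hj
    refine if_neg ?_
    rintro ⟨j', i', heq, hj'⟩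
    refine hj ?_
    have hsub := coll j i j' i' heq
    have e : j = (j - j') + j' := by ring
    rw [e]; exact dvd_add hsub hj'
  have hfz : ∀ t : ℤ, f (a ^ t) = 0 := by
    intro t
    refine if_neg ?_
    rintro ⟨j, i, heq, -⟩
    apply hb
    apply Subgroup.le_normalizer
    refine ⟨-j + t + -i, ?_⟩
    show a ^ (-j + t + -i) = b
    have e1 : a ^ (-j) * (a ^ t) * a ^ (-i) = a ^ (-j + t + -i) := by group
    rw [heq] at e1
    rw [← e1]; group
  -- algebra side
  set α : MonoidAlgebra 𝕂 G := MonoidAlgebra.of 𝕂 G a with hα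
  set β : MonoidAlgebra 𝕂 G := MonoidAlgebra.of 𝕂 G b with hβ
  have hαe : ∀ e : ℕ, α ^ e = MonoidAlgebra.single (a ^ e) (1:𝕂) := by
    intro e; rw [hα, ← map_pow, MonoidAlgebra.of_apply]
  have hαn : α ^ n = 1 := by rw [hαe, han, ← MonoidAlgebra.one_def]
  have hhat1 : ahat * α = ahat := by
    rw [hahat, Finset.sum_mul]
    have e1 : ∑ i ∈ Finset.range n, α ^ i * α = ∑ i ∈ Finset.range n, α ^ (i + 1) :=
      Finset.sum_congr rfl fun i _ => (pow_succ α i).symm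
    rw [e1]
    have h1 := Finset.sum_range_succ' (fun i => α ^ i) n
    have h2 := Finset.sum_range_succ (fun i => α ^ i) n
    rw [h2, hαn, pow_zero] at h1
    -- h1 : ∑ range n + 1 = ∑ (i+1) + 1
    exact (add_right_cancel h1.symm)
  have hhatpow : ∀ t : ℕ, ahat * α ^ t = ahat := by
    intro t
    induction t with
    | zero => rw [pow_zero, mul_one]
    | succ t ih => rw [pow_succ, ← mul_assoc, ih, hhat1]
  set V : MonoidAlgebra 𝕂 G := (α - 1) * β * ahat with hV
  have hVk : V * α ^ k = V := by
    rw [hV, mul_assoc ((α - 1) * β) ahat (α ^ k), hhatpow]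
  have hz : ahat * (α - 1) = 0 := by rw [mul_sub, hhat1, mul_one, sub_self]
  have hVV : V * V = 0 := by
    have e : V * V = ((α - 1) * β) * (ahat * (α - 1)) * (β * ahat) := by
      rw [hV]; noncomm_ring
    rw [e, hz, mul_zero, zero_mul]
  have hupow : ∀ t : ℕ, (↑u : MonoidAlgebra 𝕂 G) ^ t
      = α ^ (k * t) + (∑ p ∈ Finset.range t, α ^ (k * p)) * V := by
    intro t
    induction t with
    | zero => simp
    | succ t ih =>
      rw [pow_succ, ih, hu]
      rw [mul_add, add_mul, add_mul]
      rw [mul_assoc (∑ p ∈ Finset.range t, α ^ (k * p)) V (α ^ k), hVk]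
      rw [mul_assoc (∑ p ∈ Finset.range t, α ^ (k * p)) V V, hVV, mul_zero, add_zero]
      rw [← pow_add, ← Nat.mul_succ]
      rw [Finset.sum_range_succ, add_mul]
      abel
  -- expansion of the sum * V
  have hmulsingle : ∀ (e j : ℕ), α ^ e * β * α ^ j = MonoidAlgebra.single (a ^ e * b * a ^ j) (1:𝕂) := by
    intro e j
    rw [hαe e, hβ, MonoidAlgebra.of_apply, hαe j, MonoidAlgebra.single_mul_single,
      MonoidAlgebra.single_mul_single, one_mul, one_mul]
  have hexp : (∑ p ∈ Finset.range m, α ^ (k * p)) * V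
      = ∑ p ∈ Finset.range m, ∑ j ∈ Finset.range n,
          (MonoidAlgebra.single (a ^ (k*p+1) * b * a ^ j) (1:𝕂)
            - MonoidAlgebra.single (a ^ (k*p) * b * a ^ j) (1:𝕂)) := by
    rw [Finset.sum_mul]
    refine Finset.sum_congr rfl fun p _ => ?_
    have e0 : α ^ (k*p) * V = ((α ^ (k*p+1) - α ^ (k*p)) * β) * ahat := by
      rw [hV, pow_succ]; noncomm_ring
    rw [e0, hahat, Finset.mul_sum]
    refine Finset.sum_congr rfl fun j _ => ?_
    rw [sub_mul, sub_mul, mul_assoc, mul_assoc, ← mul_assoc (α ^ (k*p+1)), ← mul_assoc (α ^ (k*p)),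
      hmulsingle, hmulsingle]
  -- apply the linear functional
  set F : MonoidAlgebra 𝕂 G →ₗ[𝕂] 𝕂 :=
    Finsupp.linearCombination 𝕂 f ∘ₗ (MonoidAlgebra.coeffLinearEquiv 𝕂).toLinearMap with hF
  have hone : ((u : MonoidAlgebra 𝕂 G)) ^ m = 1 := by
    rw [← Units.val_pow_eq_pow_val, hum, Units.val_one]
  have hbig : α ^ (k * m) + (∑ p ∈ Finset.range m, α ^ (k * p)) * V = 1 := by
    rw [← hupow m, hone]
  have happ := congrArg (fun x : MonoidAlgebra 𝕂 G => F x) hbig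
  -- compute F 1
  have hF1 : F (1 : MonoidAlgebra 𝕂 G) = 0 := by
    rw [MonoidAlgebra.one_def]
    show Finsupp.linearCombination 𝕂 f (Finsupp.single 1 1) = 0
    rw [Finsupp.linearCombination_single, one_smul]
    have := hfz 0
    rwa [zpow_zero] at this
  have hFα : F (α ^ (k * m)) = 0 := by
    rw [hαe]
    show Finsupp.linearCombination 𝕂 f (Finsupp.single (a ^ (k*m)) 1) = 0
    rw [Finsupp.linearCombination_single, one_smul]
    have := hfz ((k*m : ℕ) : ℤ)
    rwa [zpow_natCast] at this
  have hFsingle : ∀ (g : G), F (MonoidAlgebra.single g (1:𝕂)) = f g := by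
    intro g
    show Finsupp.linearCombination 𝕂 f (Finsupp.single g 1) = f g
    rw [Finsupp.linearCombination_single, one_smul]
  have hterm : ∀ p j : ℕ,
      F (MonoidAlgebra.single (a ^ (k*p+1) * b * a ^ j) (1:𝕂)
          - MonoidAlgebra.single (a ^ (k*p) * b * a ^ j) (1:𝕂)) = -1 := by
    intro p j
    rw [map_sub, hFsingle, hFsingle]
    have hx : f (a ^ (k*p+1) * b * a ^ j) = 0 := by
      have := hf0 ((k*p+1 : ℕ) : ℤ) ((j : ℕ) : ℤ) (by
        intro hdvd
        have h1 : (d:ℤ) ∣ ((k*p : ℕ) : ℤ) := Int.natCast_dvd_natCast.mpr (hdk.mul_right p)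
        have h2 : (d:ℤ) ∣ 1 := by
          have e : ((k*p+1 : ℕ) : ℤ) - ((k*p : ℕ) : ℤ) = 1 := by push_cast; ring
          calc (d:ℤ) ∣ ((k*p+1 : ℕ) : ℤ) - ((k*p : ℕ) : ℤ) := dvd_sub hdvd h1
          _ = 1 := e
        have := Int.le_of_dvd one_pos h2
        omega)
      rwa [zpow_natCast, zpow_natCast] at this
    have hy : f (a ^ (k*p) * b * a ^ j) = 1 := by
      have := hf1 ((k*p : ℕ) : ℤ) ((j : ℕ) : ℤ) (Int.natCast_dvd_natCast.mpr (hdk.mul_right p))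
      rwa [zpow_natCast, zpow_natCast] at this
    rw [hx, hy]
    ring
  have hFsum : F ((∑ p ∈ Finset.range m, α ^ (k * p)) * V) = -((m : 𝕂) * n) := by
    rw [hexp, map_sum]
    have e1 : ∀ p ∈ Finset.range m, F (∑ j ∈ Finset.range n,
        (MonoidAlgebra.single (a ^ (k*p+1) * b * a ^ j) (1:𝕂)
          - MonoidAlgebra.single (a ^ (k*p) * b * a ^ j) (1:𝕂))) = -(n : 𝕂) := by
      intro p _
      rw [map_sum]
      rw [Finset.sum_congr rfl (fun j _ => hterm p j)]
      rw [Finset.sum_const, Finset.card_range, nsmul_eq_mul]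
      ring
    rw [Finset.sum_congr rfl e1, Finset.sum_const, Finset.card_range, nsmul_eq_mul]
    ring
  rw [map_add, hFα, hFsum, hF1, zero_add] at happ
  have : ((m * n : ℕ) : 𝕂) = 0 := by
    push_cast
    linear_combination -happ
  have hmn : (m * n : ℕ) ≠ 0 := by positivity
  exact hmn (Nat.cast_eq_zero.mp this)
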